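/- arXiv:1907.02455 — 2 statements merged into one kernel-verified Lean document; each statement's English description precedes it below -/
import Mathlib

section
/- (Ellipticity of inf-type operators) Let {K_a}_{a∈A} ⊆ L₀ be a nonempty family of kernels with associated linear operators L_a, and set Iw(x) := inf_{a∈A} L_a w(x). If u, v ∈ L¹(ω_s) are both C^{1,1} at a point x ∈ ℝⁿ, then Iu(x) and Iv(x) are finite and M⁻(u − v)(x) ≤ Iu(x) − Iv(x) ≤ M⁺(u − v)(x). -/
open MeasureTheory Metric Set Filter
open scoped ENNReal RealInnerProductSpace Topology

noncomputable section

/-- `ℝⁿ` as a Euclidean space. -/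
abbrev Rn (n : ℕ) := EuclideanSpace ℝ (Fin n)

/-- Second difference `δ(u,x,y) = u(x+y) + u(x−y) − 2u(x)`. -/
def sdelta {n : ℕ} (u : Rn n → ℝ) (x y : Rn n) : ℝ :=
  u (x + y) + u (x - y) - 2 * u x

/-- The kernel class `L₀` with order `2s` and ellipticity constants `lam ≤ Lam`. -/
def InL0 (n : ℕ) (s lam Lam : ℝ) (K : Rn n → ℝ) : Prop :=
  Measurable K ∧ (∀ y, K (-y) = K y) ∧
    ∀ y : Rn n, y ≠ 0 →
      lam * ‖y‖ ^ (-((n : ℝ) + 2 * s)) ≤ K y ∧ K y ≤ Lam * ‖y‖ ^ (-((n : ℝ) + 2 * s))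

/-- The linear nonlocal operator associated with a kernel `K`. -/
def Lop {n : ℕ} (K : Rn n → ℝ) (u : Rn n → ℝ) (x : Rn n) : ℝ :=
  ∫ y, sdelta u x y * K y

/-- The extremal Pucci operator `M⁺` associated to `L₀`. -/
def Mplus (n : ℕ) (s lam Lam : ℝ) (u : Rn n → ℝ) (x : Rn n) : ℝ :=
  ∫ y, (Lam * max (sdelta u x y) 0 - lam * (-(min (sdelta u x y) 0))) *
    ‖y‖ ^ (-((n : ℝ) + 2 * s))

/-- The extremal Pucci operator `M⁻` associated to `L₀`. -/
def Mminus (n : ℕ) (s lam Lam : ℝ) (u : Rn n → ℝ) (x : Rn n) : ℝ :=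
  ∫ y, (lam * max (sdelta u x y) 0 - Lam * (-(min (sdelta u x y) 0))) *
    ‖y‖ ^ (-((n : ℝ) + 2 * s))

/-- `J u ≥ f` in `Ω` in the viscosity sense: test functions touch `u` from above. -/
def ViscSubSol {n : ℕ} (J : (Rn n → ℝ) → Rn n → ℝ) (Ω : Set (Rn n)) (f u : Rn n → ℝ) : Prop :=
  ∀ x₀ ∈ Ω, ∀ N : Set (Rn n), IsOpen N → x₀ ∈ N → N ⊆ Ω →
    ∀ φ : Rn n → ℝ, φ x₀ = u x₀ → (∀ x ∈ N, x ≠ x₀ → u x < φ x) →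
      ContDiffOn ℝ 2 φ (closure N) → (∀ x, x ∉ N → φ x = u x) → f x₀ ≤ J φ x₀

/-- `J u ≤ f` in `Ω` in the viscosity sense: test functions touch `u` from below. -/
def ViscSupSol {n : ℕ} (J : (Rn n → ℝ) → Rn n → ℝ) (Ω : Set (Rn n)) (f u : Rn n → ℝ) : Prop :=
  ∀ x₀ ∈ Ω, ∀ N : Set (Rn n), IsOpen N → x₀ ∈ N → N ⊆ Ω →
    ∀ φ : Rn n → ℝ, φ x₀ = u x₀ → (∀ x ∈ N, x ≠ x₀ → φ x < u x) →
      ContDiffOn ℝ 2 φ (closure N) → (∀ x, x ∉ N → φ x = u x) → J φ x₀ ≤ f x₀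

/-- The sup-norm of `w` over `Ω`, valued in `ℝ≥0∞`. -/
def eSupN {n : ℕ} (Ω : Set (Rn n)) (w : Rn n → ℝ) : ℝ≥0∞ :=
  ⨆ x ∈ Ω, ENNReal.ofReal |w x|

/-- The Hölder seminorm `[w]_{C^γ(Ω)}` for `γ ∈ (0,1)`, valued in `ℝ≥0∞`. -/
def eHolder {n : ℕ} (γ : ℝ) (Ω : Set (Rn n)) (w : Rn n → ℝ) : ℝ≥0∞ :=
  ⨆ x ∈ Ω, ⨆ y ∈ Ω, ⨆ _ : x ≠ y, ENNReal.ofReal (|w x - w y| / ‖x - y‖ ^ γ)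

/-- The Hölder seminorm `[∇w]_{C^{γ-1}(Ω)}` for `γ ∈ (1,2)`, valued in `ℝ≥0∞`. -/
def eHolderGrad {n : ℕ} (γ : ℝ) (Ω : Set (Rn n)) (w : Rn n → ℝ) : ℝ≥0∞ :=
  ⨆ x ∈ Ω, ⨆ y ∈ Ω, ⨆ _ : x ≠ y,
    ENNReal.ofReal (‖gradient w x - gradient w y‖ / ‖x - y‖ ^ (γ - 1))

/-- The sup-norm of the gradient of `w` over `Ω`, valued in `ℝ≥0∞`. -/
def eSupGrad {n : ℕ} (Ω : Set (Rn n)) (w : Rn n → ℝ) : ℝ≥0∞ :=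
  ⨆ x ∈ Ω, ENNReal.ofReal ‖gradient w x‖

/-- The Hölder seminorm `[w]_{C^γ(Ω)}` for non-integer `γ ∈ (0,2)`. -/
def eHolderSemi {n : ℕ} (γ : ℝ) (Ω : Set (Rn n)) (w : Rn n → ℝ) : ℝ≥0∞ :=
  if γ < 1 then eHolder γ Ω w else eHolderGrad γ Ω w

/-- The full Hölder norm `‖w‖_{C^γ(Ω)}` for non-integer `γ ∈ (0,2)`. -/
def eHolderNrm {n : ℕ} (γ : ℝ) (Ω : Set (Rn n)) (w : Rn n → ℝ) : ℝ≥0∞ :=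
  if γ < 1 then eSupN Ω w + eHolder γ Ω w
  else eSupN Ω w + eSupGrad Ω w + eHolderGrad γ Ω w

/-- The weight `ω_s(x) = (1+|x|^{n+2s})⁻¹`. -/
def omegaS (n : ℕ) (s : ℝ) (x : Rn n) : ℝ := (1 + ‖x‖ ^ ((n : ℝ) + 2 * s))⁻¹

/-- `w ∈ L¹(ω_s)`. -/
def MemL1w (n : ℕ) (s : ℝ) (w : Rn n → ℝ) : Prop :=
  Integrable (fun x => w x * omegaS n s x)

/-- `w` is `C^{1,1}` at the point `x`. -/
def C11At {n : ℕ} (w : Rn n → ℝ) (x : Rn n) : Prop :=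
  ∃ C₀ > 0, ∃ r > 0, ∀ y : Rn n, ‖y‖ ≤ r → |sdelta w x y| ≤ C₀ * ‖y‖ ^ 2

/-- A translation invariant operator elliptic with respect to `L₀`. -/
structure EllipticOp (n : ℕ) (s lam Lam : ℝ) where
  op : (Rn n → ℝ) → Rn n → ℝ
  elliptic : ∀ u v : Rn n → ℝ, Continuous u → Continuous v → MemL1w n s u → MemL1w n s v →
    ∀ x : Rn n, C11At u x → C11At v x →
      Mminus n s lam Lam (fun z => u z - v z) x ≤ op u x - op v x ∧
        op u x - op v x ≤ Mplus n s lam Lam (fun z => u z - v z) x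
  continuousOn : ∀ (w : Rn n → ℝ) (O : Set (Rn n)), IsOpen O → ContDiffOn ℝ 2 w O →
    (∃ M, ∀ x, |w x| ≤ M) → ContinuousOn (op w) O
  translationInvariant : ∀ (w : Rn n → ℝ) (z x : Rn n), Continuous w → MemL1w n s w →
    C11At w (x + z) → op (fun y => w (y + z)) x = op w (x + z)

/-- `w` coincides with a quadratic polynomial on `B_ε`. -/
def IsQuadOn {n : ℕ} (ε : ℝ) (w : Rn n → ℝ) : Prop :=
  ∃ (a : ℝ) (b : Rn n) (Q : Rn n →L[ℝ] Rn n →L[ℝ] ℝ),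
    ∀ x ∈ ball (0 : Rn n) ε, w x = a + ⟪b, x⟫ + Q x x

/-- Weak convergence of a sequence of elliptic operators. -/
def WeakConvSeq {n : ℕ} {s lam Lam : ℝ} (Im : ℕ → EllipticOp n s lam Lam)
    (I : EllipticOp n s lam Lam) : Prop :=
  ∀ ε : ℝ, 0 < ε → ∀ w : Rn n → ℝ, MemL1w n s w → IsQuadOn ε w →
    TendstoUniformlyOn (fun m => (Im m).op w) (I.op w) atTop (closure (ball 0 (ε / 2)))

section AuxLemmas

variable {n : ℕ}

lemma sdelta_zero (w : Rn n → ℝ) (x : Rn n) : sdelta w x 0 = 0 := by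
  unfold sdelta; rw [add_zero, sub_zero]; ring

lemma measurable_sdelta {w : Rn n → ℝ} (hw : Measurable w) (x : Rn n) :
    Measurable fun y => sdelta w x y := by
  unfold sdelta
  exact ((hw.comp (measurable_const.add measurable_id)).add
    (hw.comp (measurable_const.sub measurable_id))).sub measurable_const

lemma sdelta_sub (u v : Rn n → ℝ) (x y : Rn n) :
    sdelta (fun z => u z - v z) x y = sdelta u x y - sdelta v x y := by
  unfold sdelta; ring

lemma geom_term_eq (n : ℕ) {α r : ℝ} (hr : 0 < r) :
    ∀ k : ℕ, (r/2^(k+1))^α * (r/2^k)^(n:ℕ) =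
      (r ^ α * 2 ^ (-α) * r ^ (n:ℕ)) * ((2:ℝ) ^ (-(α + (n:ℝ))))^k := by
  intro k
  have h2p : (0:ℝ) < 2 := two_pos
  have e1 : (r/2^(k+1):ℝ)^α = r^α * 2 ^ (-(((k:ℝ)+1)*α)) := by
    rw [Real.div_rpow hr.le (by positivity), ← Real.rpow_natCast (2:ℝ) (k+1),
      ← Real.rpow_mul h2p.le, div_eq_mul_inv, ← Real.rpow_neg h2p.le]
    push_cast; ring_nf
  have e2 : (r/2^k:ℝ)^(n:ℕ) = r^(n:ℕ) * 2 ^ (-((k:ℝ)*(n:ℝ))) := by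
    rw [div_pow, ← Real.rpow_natCast ((2:ℝ)^k) n, ← Real.rpow_natCast (2:ℝ) k,
      ← Real.rpow_mul h2p.le, div_eq_mul_inv, ← Real.rpow_neg h2p.le]
  have e3 : ((2:ℝ) ^ (-(α + (n:ℝ))))^k = 2 ^ ((-(α + (n:ℝ)))*(k:ℝ)) := by
    rw [← Real.rpow_natCast ((2:ℝ) ^ (-(α + (n:ℝ)))) k, ← Real.rpow_mul h2p.le]
  rw [e1, e2, e3]
  rw [show r ^ α * 2 ^ (-(((k:ℝ) + 1) * α)) * (r ^ (n:ℕ) * 2 ^ (-((k:ℝ) * (n:ℝ))))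
      = (r ^ α * r ^ (n:ℕ)) * ((2:ℝ) ^ (-(((k:ℝ) + 1) * α)) * 2 ^ (-((k:ℝ) * (n:ℝ)))) by ring,
    show r ^ α * 2 ^ (-α) * r ^ (n:ℕ) * (2:ℝ) ^ (-(α + (n:ℝ)) * (k:ℝ))
      = (r ^ α * r ^ (n:ℕ)) * ((2:ℝ) ^ (-α) * 2 ^ (-(α + (n:ℝ)) * (k:ℝ))) by ring,
    ← Real.rpow_add h2p, ← Real.rpow_add h2p]
  congr 1
  ring

lemma integrableOn_norm_rpow_ball (n : ℕ) {α : ℝ} (hα : -(n:ℝ) < α) {r : ℝ} (hr : 0 < r) :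
    IntegrableOn (fun y : Rn n => ‖y‖ ^ α) (ball (0 : Rn n) r) := by
  have hmeas : Measurable fun y : Rn n => ‖y‖ ^ α := by fun_prop
  have hnonneg : ∀ y : Rn n, 0 ≤ ‖y‖ ^ α := fun y => Real.rpow_nonneg (norm_nonneg y) α
  refine ⟨hmeas.aestronglyMeasurable, ?_⟩
  rw [hasFiniteIntegral_iff_ofReal (ae_of_all _ hnonneg)]
  rcases le_or_gt 0 α with hα0 | hα0
  · calc ∫⁻ y in ball (0:Rn n) r, ENNReal.ofReal (‖y‖ ^ α)
        ≤ ∫⁻ _ in ball (0:Rn n) r, ENNReal.ofReal (max 1 (r ^ α)) := by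
          refine setLIntegral_mono measurable_const fun y hy => ENNReal.ofReal_le_ofReal ?_
          rcases eq_or_lt_of_le hα0 with h0 | h0
          · rw [← h0, Real.rpow_zero]; exact le_max_left _ _
          · exact le_max_of_le_right <| Real.rpow_le_rpow (norm_nonneg y)
              (le_of_lt (mem_ball_zero_iff.1 hy)) hα0
      _ = ENNReal.ofReal (max 1 (r ^ α)) * volume (ball (0:Rn n) r) := setLIntegral_const _ _
      _ < ⊤ := ENNReal.mul_lt_top ENNReal.ofReal_lt_top measure_ball_lt_top
  · set A : ℕ → Set (Rn n) := fun k => closedBall 0 (r/2^k) \ closedBall 0 (r/2^(k+1)) with hA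
    have hsub : ball (0:Rn n) r ⊆ {0} ∪ ⋃ k, A k := by
      intro y hy
      rcases eq_or_ne y 0 with h0 | h0
      · exact Or.inl (by simp [h0])
      · have hy0 : 0 < ‖y‖ := norm_pos_iff.2 h0
        have hex : ∃ k : ℕ, r / 2^(k+1) < ‖y‖ := by
          obtain ⟨k, hk⟩ := pow_unbounded_of_one_lt (r / ‖y‖) (one_lt_two (α := ℝ))
          refine ⟨k, ?_⟩
          rw [div_lt_iff₀ hy0] at hk
          rw [div_lt_iff₀ (by positivity)]
          calc r < 2^k * ‖y‖ := hk
            _ ≤ ‖y‖ * 2^(k+1) := by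
                rw [mul_comm]
                exact mul_le_mul_of_nonneg_left (pow_le_pow_right₀ one_le_two (Nat.le_succ k))
                  hy0.le
        right
        refine mem_iUnion.2 ⟨Nat.find hex, ?_, fun h => ?_⟩
        · rw [mem_closedBall_zero_iff]
          rcases Nat.eq_zero_or_pos (Nat.find hex) with h0' | h0'
          · rw [h0']; simpa using (mem_ball_zero_iff.1 hy).le
          · obtain ⟨m, hm⟩ := Nat.exists_eq_succ_of_ne_zero h0'.ne'
            have := Nat.find_min hex (by omega : m < Nat.find hex)
            rw [hm]
            exact le_of_not_gt this
        · exact absurd (mem_closedBall_zero_iff.1 h) (not_le.2 (Nat.find_spec hex))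
    calc ∫⁻ y in ball (0:Rn n) r, ENNReal.ofReal (‖y‖ ^ α)
        ≤ ∫⁻ y in ({0} ∪ ⋃ k, A k : Set (Rn n)), ENNReal.ofReal (‖y‖ ^ α) :=
          lintegral_mono_set hsub
      _ ≤ (∫⁻ y in ({0} : Set (Rn n)), ENNReal.ofReal (‖y‖ ^ α))
            + ∫⁻ y in (⋃ k, A k), ENNReal.ofReal (‖y‖ ^ α) := lintegral_union_le _ _ _
      _ ≤ 0 + ∑' k, ∫⁻ y in A k, ENNReal.ofReal (‖y‖ ^ α) := by
          gcongr
          · rw [lintegral_singleton]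
            simp [Real.zero_rpow hα0.ne]
          · exact lintegral_iUnion_le _ _
      _ < ⊤ := by
          rw [zero_add]
          set C : ℝ := r ^ α * 2 ^ (-α) * r ^ (n:ℕ) with hC
          set ρ : ℝ := (2:ℝ) ^ (-(α + (n:ℝ))) with hρ
          have hρnn : 0 ≤ ρ := Real.rpow_nonneg (by norm_num) _
          have hCnn : 0 ≤ C := by
            have h1 : (0:ℝ) ≤ r ^ α := Real.rpow_nonneg hr.le _
            have h2 : (0:ℝ) ≤ (2:ℝ) ^ (-α) := Real.rpow_nonneg (by norm_num) _
            positivity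
          have hρ1 : ρ < 1 :=
            Real.rpow_lt_one_of_one_lt_of_neg one_lt_two (by linarith)
          have hterm : ∀ k, ∫⁻ y in A k, ENNReal.ofReal (‖y‖ ^ α)
              ≤ (ENNReal.ofReal C * volume (ball (0:Rn n) 1)) * (ENNReal.ofReal ρ)^k := by
            intro k
            have hrk1 : (0:ℝ) < r / 2^(k+1) := by positivity
            calc ∫⁻ y in A k, ENNReal.ofReal (‖y‖ ^ α)
                ≤ ∫⁻ _ in A k, ENNReal.ofReal ((r/2^(k+1)) ^ α) := by
                  refine setLIntegral_mono measurable_const fun y hy =>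
                    ENNReal.ofReal_le_ofReal ?_
                  have hylb : r/2^(k+1) < ‖y‖ :=
                    not_le.1 (fun h => hy.2 (mem_closedBall_zero_iff.2 h))
                  exact Real.rpow_le_rpow_of_nonpos hrk1 hylb.le hα0.le
              _ = ENNReal.ofReal ((r/2^(k+1)) ^ α) * volume (A k) := setLIntegral_const _ _
              _ ≤ ENNReal.ofReal ((r/2^(k+1)) ^ α) * volume (closedBall (0:Rn n) (r/2^k)) :=
                  mul_le_mul_right (measure_mono diff_subset) _
              _ = ENNReal.ofReal ((r/2^(k+1)) ^ α) *
                    (ENNReal.ofReal ((r/2^k) ^ (n:ℕ)) * volume (ball (0:Rn n) 1)) := by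
                  rw [Measure.addHaar_closedBall _ _ (by positivity : (0:ℝ) ≤ r/2^k)]
                  rw [finrank_euclideanSpace_fin]
              _ = (ENNReal.ofReal C * volume (ball (0:Rn n) 1)) * (ENNReal.ofReal ρ)^k := by
                  rw [← mul_assoc, ← ENNReal.ofReal_mul (Real.rpow_nonneg hrk1.le _),
                    geom_term_eq n hr k, ENNReal.ofReal_mul hCnn, ENNReal.ofReal_pow hρnn]
                  ring
          calc ∑' k, ∫⁻ y in A k, ENNReal.ofReal (‖y‖ ^ α)
              ≤ ∑' k, (ENNReal.ofReal C * volume (ball (0:Rn n) 1)) * (ENNReal.ofReal ρ)^k :=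
                ENNReal.tsum_le_tsum hterm
            _ = (ENNReal.ofReal C * volume (ball (0:Rn n) 1)) * ∑' k, (ENNReal.ofReal ρ)^k :=
                ENNReal.tsum_mul_left
            _ < ⊤ := by
                rw [ENNReal.tsum_geometric]
                refine ENNReal.mul_lt_top
                  (ENNReal.mul_lt_top ENNReal.ofReal_lt_top measure_ball_lt_top) ?_
                rw [ENNReal.inv_lt_top]
                exact tsub_pos_of_lt (ENNReal.ofReal_lt_one.2 hρ1)

lemma omegaS_pos (n : ℕ) (s : ℝ) (x : Rn n) : 0 < omegaS n s x := by
  unfold omegaS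
  have h : (0:ℝ) ≤ ‖x‖ ^ ((n:ℝ) + 2*s) := Real.rpow_nonneg (norm_nonneg _) _
  positivity

lemma continuous_omegaS (n : ℕ) {s : ℝ} (hs : 0 < s) : Continuous (omegaS n s) := by
  unfold omegaS
  refine Continuous.inv₀ (continuous_const.add ?_) fun x => ?_
  · exact continuous_norm.rpow_const fun x => Or.inr (by positivity)
  · have h : (0:ℝ) ≤ ‖x‖ ^ ((n:ℝ) + 2*s) := Real.rpow_nonneg (norm_nonneg _) _
    positivity

lemma omegaS_neg_arg (n : ℕ) (s : ℝ) (y : Rn n) : omegaS n s (-y) = omegaS n s y := by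
  unfold omegaS; rw [norm_neg]

lemma inv_le_mul_inv' {A B C : ℝ} (hA : 0 < A) (hB : 0 < B) (h : B ≤ C * A) :
    A⁻¹ ≤ C * B⁻¹ := by
  rw [inv_eq_one_div, ← div_eq_mul_inv, div_le_div_iff₀ hA hB, one_mul]
  exact h

lemma add_rpow_le {q : ℝ} (hq : 0 ≤ q) {a b : ℝ} (ha : 0 ≤ a) (hb : 0 ≤ b) :
    (a + b) ^ q ≤ 2 ^ q * (a ^ q + b ^ q) := by
  have h2 : (0:ℝ) ≤ 2 ^ q := Real.rpow_nonneg (by norm_num) q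
  rcases le_total a b with h | h
  · have hb' : 0 ≤ b ^ q := Real.rpow_nonneg hb q
    have ha' : 0 ≤ a ^ q := Real.rpow_nonneg ha q
    calc (a+b)^q ≤ (2*b)^q := Real.rpow_le_rpow (by linarith) (by linarith) hq
      _ = 2^q * b^q := Real.mul_rpow (by norm_num) hb
      _ ≤ 2^q * (a^q + b^q) := by nlinarith
  · have hb' : 0 ≤ b ^ q := Real.rpow_nonneg hb q
    have ha' : 0 ≤ a ^ q := Real.rpow_nonneg ha q
    calc (a+b)^q ≤ (2*a)^q := Real.rpow_le_rpow (by linarith) (by linarith) hq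
      _ = 2^q * a^q := Real.mul_rpow (by norm_num) ha
      _ ≤ 2^q * (a^q + b^q) := by nlinarith

lemma one_le_two_rpow {q : ℝ} (hq : 0 ≤ q) : (1:ℝ) ≤ 2 ^ q := by
  calc (1:ℝ) = 2 ^ (0:ℝ) := (Real.rpow_zero 2).symm
    _ ≤ 2 ^ q := Real.rpow_le_rpow_of_exponent_le one_le_two hq

lemma omegaS_shift (n : ℕ) {s : ℝ} (hs : 0 < s) (x z : Rn n) :
    omegaS n s (z - x) ≤ (2 ^ ((n:ℝ)+2*s) * (1 + ‖x‖ ^ ((n:ℝ)+2*s))) * omegaS n s z := by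
  set q : ℝ := (n:ℝ) + 2*s with hqdef
  have hq0 : (0:ℝ) ≤ q := by positivity
  have ha : (0:ℝ) ≤ ‖z - x‖ ^ q := Real.rpow_nonneg (norm_nonneg _) _
  have hb : (0:ℝ) ≤ ‖x‖ ^ q := Real.rpow_nonneg (norm_nonneg _) _
  have key : 1 + ‖z‖^q ≤ (2^q * (1 + ‖x‖^q)) * (1 + ‖z - x‖^q) := by
    have h1 : ‖z‖ ≤ ‖z - x‖ + ‖x‖ := by
      calc ‖z‖ = ‖(z - x) + x‖ := by rw [sub_add_cancel]
        _ ≤ ‖z - x‖ + ‖x‖ := norm_add_le _ _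
    have h2 : ‖z‖^q ≤ (‖z - x‖ + ‖x‖)^q := Real.rpow_le_rpow (norm_nonneg z) h1 hq0
    have h3 := add_rpow_le hq0 (norm_nonneg (z - x)) (norm_nonneg x)
    have h4 : (1:ℝ) ≤ 2^q := one_le_two_rpow hq0
    have e : 2^q * (1 + ‖x‖^q) * (1 + ‖z - x‖^q)
        = 2^q + 2^q * ‖z - x‖^q + 2^q * ‖x‖^q + 2^q * (‖x‖^q * ‖z - x‖^q) := by ring
    have e2 : 2^q * ‖z - x‖^q ≥ 1 * ‖z - x‖^q := mul_le_mul_of_nonneg_right h4 ha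
    have e3 : 2^q * ‖x‖^q ≥ 1 * ‖x‖^q := mul_le_mul_of_nonneg_right h4 hb
    have e4 : 0 ≤ 2^q * (‖x‖^q * ‖z - x‖^q) :=
      mul_nonneg (by linarith) (mul_nonneg hb ha)
    have e5 : ‖z‖^q ≤ 2^q * (‖z - x‖^q + ‖x‖^q) := h2.trans h3
    nlinarith
  unfold omegaS
  exact inv_le_mul_inv' (by positivity) (by positivity) key

lemma integrable_omegaS (n : ℕ) {s : ℝ} (hs : 0 < s) :
    Integrable (omegaS n s) (volume : Measure (Rn n)) := by
  set q : ℝ := (n:ℝ) + 2*s with hqdef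
  have hq0 : (0:ℝ) ≤ q := by positivity
  have hnr : (Module.finrank ℝ (Rn n) : ℝ) < q := by
    rw [finrank_euclideanSpace_fin]; simp only [hqdef]; linarith
  refine Integrable.mono' ((integrable_one_add_norm hnr (μ := volume)).const_mul (2^q))
    (continuous_omegaS n hs).aestronglyMeasurable (ae_of_all _ fun x => ?_)
  rw [Real.norm_of_nonneg (omegaS_pos n s x).le]
  have hx : (0:ℝ) ≤ ‖x‖ ^ q := Real.rpow_nonneg (norm_nonneg _) _
  have key : (1 + ‖x‖)^q ≤ 2^q * (1 + ‖x‖^q) := by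
    calc (1 + ‖x‖)^q ≤ 2^q * (1^q + ‖x‖^q) :=
          add_rpow_le hq0 zero_le_one (norm_nonneg x)
      _ = 2^q * (1 + ‖x‖^q) := by rw [Real.one_rpow]
  have h1 : (0:ℝ) < 1 + ‖x‖^q := by positivity
  have h2 : (0:ℝ) < (1 + ‖x‖)^q := Real.rpow_pos_of_pos (by positivity) q
  unfold omegaS
  calc (1 + ‖x‖^q)⁻¹ ≤ 2^q * ((1 + ‖x‖)^q)⁻¹ := inv_le_mul_inv' h1 h2 key
    _ = 2^q * (1 + ‖x‖)^(-q) := by rw [← Real.rpow_neg (by positivity)]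

end AuxLemmas
section AuxLemmas2

lemma integrable_shift_weight (n : ℕ) {s : ℝ} (hs : 0 < s) {w : Rn n → ℝ}
    (hw : Measurable w) (hL1 : MemL1w n s w) (x : Rn n) :
    Integrable (fun z : Rn n => w z * omegaS n s (z - x)) := by
  set C : ℝ := 2 ^ ((n:ℝ)+2*s) * (1 + ‖x‖ ^ ((n:ℝ)+2*s)) with hCdef
  have hC : 0 ≤ C := by
    have h1 : (0:ℝ) ≤ (2:ℝ) ^ ((n:ℝ)+2*s) := Real.rpow_nonneg (by norm_num) _
    have h2 : (0:ℝ) ≤ ‖x‖ ^ ((n:ℝ)+2*s) := Real.rpow_nonneg (norm_nonneg _) _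
    positivity
  have hmeas : AEStronglyMeasurable (fun z : Rn n => w z * omegaS n s (z - x)) volume :=
    (hw.mul (((continuous_omegaS n hs).measurable).comp
      (measurable_id.sub measurable_const))).aestronglyMeasurable
  refine Integrable.mono' ((hL1.abs.const_mul C)) hmeas (ae_of_all _ fun z => ?_)
  rw [Real.norm_eq_abs, abs_mul, abs_of_nonneg (omegaS_pos n s _).le]
  calc |w z| * omegaS n s (z - x) ≤ |w z| * (C * omegaS n s z) :=
        mul_le_mul_of_nonneg_left (omegaS_shift n hs x z) (abs_nonneg _)
    _ = C * |w z * omegaS n s z| := by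
        rw [abs_mul, abs_of_nonneg (omegaS_pos n s z).le]; ring

lemma integrable_plus_weight (n : ℕ) {s : ℝ} (hs : 0 < s) {w : Rn n → ℝ}
    (hw : Measurable w) (hL1 : MemL1w n s w) (x : Rn n) :
    Integrable (fun y : Rn n => w (x + y) * omegaS n s y) := by
  have h := (integrable_shift_weight n hs hw hL1 x).comp_add_left x
  simpa only [add_sub_cancel_left] using h

lemma integrable_minus_weight (n : ℕ) {s : ℝ} (hs : 0 < s) {w : Rn n → ℝ}
    (hw : Measurable w) (hL1 : MemL1w n s w) (x : Rn n) :
    Integrable (fun y : Rn n => w (x - y) * omegaS n s y) := by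
  have h := (integrable_shift_weight n hs hw hL1 x).comp_sub_left x
  have e : ∀ y : Rn n, x - y - x = -y := fun y => by abel
  simpa only [e, omegaS_neg_arg] using h

lemma integrable_abs_sdelta_rpow (n : ℕ) {s : ℝ} (hs0 : 0 < s) (hs1 : s < 1)
    {w : Rn n → ℝ} (hw : Measurable w) (hL1 : MemL1w n s w) {x : Rn n} (h11 : C11At w x) :
    Integrable (fun y : Rn n => |sdelta w x y| * ‖y‖ ^ (-((n:ℝ) + 2*s))) := by
  set q : ℝ := (n:ℝ) + 2*s with hqdef
  have hq0 : (0:ℝ) < q := by positivity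
  obtain ⟨C₀, hC₀, r, hr, hC⟩ := h11
  have hmeas : Measurable fun y : Rn n => |sdelta w x y| * ‖y‖ ^ (-q) :=
    (measurable_sdelta hw x).abs.mul (by fun_prop)
  have hball : IntegrableOn (fun y : Rn n => |sdelta w x y| * ‖y‖ ^ (-q))
      (ball (0:Rn n) r) := by
    have hint : IntegrableOn (fun y : Rn n => C₀ * ‖y‖ ^ (2 - q)) (ball (0:Rn n) r) :=
      (integrableOn_norm_rpow_ball n (by push_cast; simp only [hqdef]; linarith) hr).const_mul C₀
    refine Integrable.mono hint hmeas.aestronglyMeasurable.restrict ?_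
    refine (ae_restrict_iff' measurableSet_ball).2 (ae_of_all _ fun y hy => ?_)
    have hrpow : (0:ℝ) ≤ ‖y‖ ^ (-q) := Real.rpow_nonneg (norm_nonneg _) _
    have hrpow2 : (0:ℝ) ≤ ‖y‖ ^ (2 - q) := Real.rpow_nonneg (norm_nonneg _) _
    rw [Real.norm_of_nonneg (mul_nonneg (abs_nonneg _) hrpow),
      Real.norm_of_nonneg (mul_nonneg hC₀.le hrpow2)]
    rcases eq_or_ne y 0 with h0 | h0
    · subst h0
      rw [sdelta_zero, abs_zero, zero_mul]
      positivity
    · have hy0 : 0 < ‖y‖ := norm_pos_iff.2 h0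
      have h2 : |sdelta w x y| ≤ C₀ * ‖y‖ ^ 2 := hC y (mem_ball_zero_iff.1 hy).le
      calc |sdelta w x y| * ‖y‖ ^ (-q) ≤ C₀ * ‖y‖ ^ 2 * ‖y‖ ^ (-q) :=
            mul_le_mul_of_nonneg_right h2 hrpow
        _ = C₀ * ‖y‖ ^ (2 - q) := by
            rw [mul_assoc]
            congr 1
            have e : ((2:ℕ):ℝ) + -q = 2 - q := by push_cast; ring
            rw [← Real.rpow_natCast ‖y‖ 2, ← Real.rpow_add hy0, e]
  have hcomp : IntegrableOn (fun y : Rn n => |sdelta w x y| * ‖y‖ ^ (-q))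
      (ball (0:Rn n) r)ᶜ := by
    set c : ℝ := 1 + r ^ (-q) with hcdef
    have hrq : (0:ℝ) < r ^ q := Real.rpow_pos_of_pos hr q
    have hc : 0 ≤ c := by
      have : (0:ℝ) ≤ r ^ (-q) := Real.rpow_nonneg hr.le _
      positivity
    have hS : Integrable (fun y : Rn n =>
        (|w (x + y)| + |w (x - y)| + 2 * |w x|) * omegaS n s y) := by
      have h1 : Integrable (fun y : Rn n => |w (x + y)| * omegaS n s y) :=
        (integrable_plus_weight n hs0 hw hL1 x).abs.congr (ae_of_all _ fun y => by
          simp [abs_mul, abs_of_nonneg (omegaS_pos n s y).le])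
      have h2 : Integrable (fun y : Rn n => |w (x - y)| * omegaS n s y) :=
        (integrable_minus_weight n hs0 hw hL1 x).abs.congr (ae_of_all _ fun y => by
          simp [abs_mul, abs_of_nonneg (omegaS_pos n s y).le])
      have h3 : Integrable (fun y : Rn n => (2 * |w x|) * omegaS n s y) :=
        (integrable_omegaS n hs0).const_mul _
      exact ((h1.add h2).add h3).congr (ae_of_all _ fun y => by
        simp only [Pi.add_apply]; ring)
    refine Integrable.mono ((hS.const_mul c).integrableOn)
      hmeas.aestronglyMeasurable.restrict ?_
    refine (ae_restrict_iff' measurableSet_ball.compl).2 (ae_of_all _ fun y hy => ?_)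
    have hyr : r ≤ ‖y‖ := not_lt.1 fun h => hy (mem_ball_zero_iff.2 h)
    have hy0 : (0:ℝ) < ‖y‖ := lt_of_lt_of_le hr hyr
    have hyq : (0:ℝ) < ‖y‖ ^ q := Real.rpow_pos_of_pos hy0 q
    have hSnn : 0 ≤ |w (x + y)| + |w (x - y)| + 2 * |w x| := by positivity
    have hω : 0 ≤ omegaS n s y := (omegaS_pos n s y).le
    have htq : ‖y‖ ^ (-q) ≤ c * omegaS n s y := by
      have hBA : 1 + ‖y‖ ^ q ≤ c * ‖y‖ ^ q := by
        have h1 : r ^ (-q) * r ^ q = 1 := by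
          rw [← Real.rpow_add hr]; simp
        have h2 : r ^ (-q) * r ^ q ≤ r ^ (-q) * ‖y‖ ^ q :=
          mul_le_mul_of_nonneg_left (Real.rpow_le_rpow hr.le hyr hq0.le)
            (Real.rpow_nonneg hr.le _)
        have e : c * ‖y‖ ^ q = ‖y‖ ^ q + r ^ (-q) * ‖y‖ ^ q := by
          rw [hcdef]; ring
        rw [e]
        rw [h1] at h2
        linarith
      have := inv_le_mul_inv' hyq (by positivity : (0:ℝ) < 1 + ‖y‖ ^ q) hBA
      rw [Real.rpow_neg (norm_nonneg y)]
      exact this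
    have hδ : |sdelta w x y| ≤ |w (x + y)| + |w (x - y)| + 2 * |w x| := by
      unfold sdelta
      calc |w (x + y) + w (x - y) - 2 * w x|
          ≤ |w (x + y) + w (x - y)| + |2 * w x| := abs_sub _ _
        _ ≤ |w (x + y)| + |w (x - y)| + 2 * |w x| := by
            rw [abs_mul, abs_two]
            linarith [abs_add_le (w (x + y)) (w (x - y))]
    have hrpow : (0:ℝ) ≤ ‖y‖ ^ (-q) := Real.rpow_nonneg (norm_nonneg _) _
    rw [Real.norm_of_nonneg (mul_nonneg (abs_nonneg _) hrpow), Real.norm_of_nonneg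
      (by positivity : (0:ℝ) ≤ c * ((|w (x + y)| + |w (x - y)| + 2 * |w x|) * omegaS n s y))]
    calc |sdelta w x y| * ‖y‖ ^ (-q)
        ≤ (|w (x + y)| + |w (x - y)| + 2 * |w x|) * (c * omegaS n s y) :=
          mul_le_mul hδ htq hrpow hSnn
      _ = c * ((|w (x + y)| + |w (x - y)| + 2 * |w x|) * omegaS n s y) := by ring
  have := (hball.union hcomp).mono_set
    (by rw [union_compl_self] : (univ : Set (Rn n)) ⊆ ball 0 r ∪ (ball 0 r)ᶜ)
  exact integrableOn_univ.1 this

end AuxLemmas2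
section AuxLemmas3

lemma integrable_pucci {n : ℕ} (c1 c2 p : ℝ) {f : Rn n → ℝ} (hf : Measurable f)
    (hint : Integrable (fun y : Rn n => |f y| * ‖y‖ ^ p)) :
    Integrable (fun y : Rn n => (c1 * max (f y) 0 - c2 * (-(min (f y) 0))) * ‖y‖ ^ p) := by
  have hmeas : Measurable fun y : Rn n =>
      (c1 * max (f y) 0 - c2 * (-(min (f y) 0))) * ‖y‖ ^ p := by
    refine Measurable.mul ?_ (by fun_prop)
    exact (measurable_const.mul (hf.max measurable_const)).sub
      (measurable_const.mul ((hf.min measurable_const).neg))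
  refine Integrable.mono (hint.const_mul (|c1| + |c2|)) hmeas.aestronglyMeasurable
    (ae_of_all _ fun y => ?_)
  have ht : (0:ℝ) ≤ ‖y‖ ^ p := Real.rpow_nonneg (norm_nonneg _) _
  have hmax : |max (f y) 0| ≤ |f y| := by
    rcases le_total (f y) 0 with h | h
    · rw [max_eq_right h, abs_zero]; exact abs_nonneg _
    · rw [max_eq_left h]
  have hmin : |min (f y) 0| ≤ |f y| := by
    rcases le_total (f y) 0 with h | h
    · rw [min_eq_left h]
    · rw [min_eq_right h, abs_zero]; exact abs_nonneg _
  have h1 : |c1 * max (f y) 0 - c2 * (-(min (f y) 0))| ≤ (|c1| + |c2|) * |f y| := by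
    calc |c1 * max (f y) 0 - c2 * (-(min (f y) 0))|
        ≤ |c1 * max (f y) 0| + |c2 * (-(min (f y) 0))| := abs_sub _ _
      _ = |c1| * |max (f y) 0| + |c2| * |min (f y) 0| := by
          rw [abs_mul, abs_mul, abs_neg]
      _ ≤ |c1| * |f y| + |c2| * |f y| :=
          add_le_add (mul_le_mul_of_nonneg_left hmax (abs_nonneg c1))
            (mul_le_mul_of_nonneg_left hmin (abs_nonneg c2))
      _ = (|c1| + |c2|) * |f y| := by ring
  calc ‖(c1 * max (f y) 0 - c2 * (-(min (f y) 0))) * ‖y‖ ^ p‖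
      = |c1 * max (f y) 0 - c2 * (-(min (f y) 0))| * ‖y‖ ^ p := by
        rw [Real.norm_eq_abs, abs_mul, abs_of_nonneg ht]
    _ ≤ ((|c1| + |c2|) * |f y|) * ‖y‖ ^ p := mul_le_mul_of_nonneg_right h1 ht
    _ ≤ ‖(|c1| + |c2|) * (|f y| * ‖y‖ ^ p)‖ := by
        rw [Real.norm_eq_abs]
        exact le_trans (le_of_eq (by ring)) (le_abs_self _)

lemma integrable_sdelta_mul_kernel {n : ℕ} {s lam Lam : ℝ} (hlam : 0 < lam) {K : Rn n → ℝ}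
    (hK : InL0 n s lam Lam K) {w : Rn n → ℝ} (hw : Measurable w) {x : Rn n}
    (hint : Integrable (fun y : Rn n => |sdelta w x y| * ‖y‖ ^ (-((n:ℝ) + 2*s)))) :
    Integrable (fun y : Rn n => sdelta w x y * K y) := by
  obtain ⟨hKm, hKsym, hKb⟩ := hK
  refine Integrable.mono (hint.const_mul Lam)
    ((measurable_sdelta hw x).mul hKm).aestronglyMeasurable (ae_of_all _ fun y => ?_)
  rcases eq_or_ne y 0 with h0 | h0
  · subst h0
    rw [Real.norm_eq_abs, sdelta_zero, zero_mul, abs_zero]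
    exact norm_nonneg _
  · obtain ⟨hlb, hub⟩ := hKb y h0
    have ht : (0:ℝ) ≤ ‖y‖ ^ (-((n:ℝ)+2*s)) := Real.rpow_nonneg (norm_nonneg _) _
    have hK0 : 0 ≤ K y := le_trans (by positivity) hlb
    rw [Real.norm_eq_abs, abs_mul, Real.norm_eq_abs]
    calc |sdelta w x y| * |K y|
        ≤ |sdelta w x y| * (Lam * ‖y‖ ^ (-((n:ℝ)+2*s))) := by
          rw [abs_of_nonneg hK0]
          exact mul_le_mul_of_nonneg_left hub (abs_nonneg _)
      _ = Lam * (|sdelta w x y| * ‖y‖ ^ (-((n:ℝ)+2*s))) := by ring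
      _ ≤ |Lam * (|sdelta w x y| * ‖y‖ ^ (-((n:ℝ)+2*s)))| := le_abs_self _

lemma pointwise_bracket {n : ℕ} {s lam Lam : ℝ} (hlam : 0 < lam) (hlL : lam ≤ Lam)
    {K : Rn n → ℝ} (hK : InL0 n s lam Lam K) (w : Rn n → ℝ) (x y : Rn n) :
    (lam * max (sdelta w x y) 0 - Lam * (-(min (sdelta w x y) 0))) * ‖y‖ ^ (-((n:ℝ)+2*s))
      ≤ sdelta w x y * K y ∧
    sdelta w x y * K y ≤
      (Lam * max (sdelta w x y) 0 - lam * (-(min (sdelta w x y) 0))) * ‖y‖ ^ (-((n:ℝ)+2*s)) := by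
  rcases eq_or_ne y 0 with h0 | h0
  · subst h0
    rw [sdelta_zero]
    constructor <;> simp
  · obtain ⟨hlb, hub⟩ := hK.2.2 y h0
    have ht : (0:ℝ) ≤ ‖y‖ ^ (-((n:ℝ)+2*s)) := Real.rpow_nonneg (norm_nonneg _) _
    set t := ‖y‖ ^ (-((n:ℝ)+2*s)) with htdef
    set δ := sdelta w x y with hδdef
    rcases le_total 0 δ with h | h
    · rw [max_eq_left h, min_eq_right h]
      constructor
      · calc (lam * δ - Lam * (-0)) * t = δ * (lam * t) := by ring
          _ ≤ δ * K y := mul_le_mul_of_nonneg_left hlb h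
      · calc δ * K y ≤ δ * (Lam * t) := mul_le_mul_of_nonneg_left hub h
          _ = (Lam * δ - lam * (-0)) * t := by ring
    · rw [max_eq_right h, min_eq_left h]
      constructor
      · calc (lam * 0 - Lam * (-δ)) * t = δ * (Lam * t) := by ring
          _ ≤ δ * K y := mul_le_mul_of_nonpos_left hub h
      · calc δ * K y ≤ δ * (lam * t) := mul_le_mul_of_nonpos_left hlb h
          _ = (Lam * 0 - lam * (-δ)) * t := by ring

end AuxLemmas3
/-- **Ellipticity of inf-type operators.** If `Iw(x) = inf_a L_a w(x)` with kernels in `L₀`,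
and `u`, `v` are `C^{1,1}` at `x` and in `L¹(ω_s)`, then `Iu(x)`, `Iv(x)` are well defined and
finite and `M⁻(u−v)(x) ≤ Iu(x) − Iv(x) ≤ M⁺(u−v)(x)`. -/
theorem inf_operator_elliptic
    (n : ℕ) (hn : 1 ≤ n) (s : ℝ) (hs0 : 0 < s) (hs1 : s < 1)
    (lam Lam : ℝ) (hlam : 0 < lam) (hlL : lam ≤ Lam)
    (A : Type) (hA : Nonempty A) (Ker : A → Rn n → ℝ)
    (hK : ∀ a, InL0 n s lam Lam (Ker a))
    (u v : Rn n → ℝ) (hum : Measurable u) (hvm : Measurable v)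
    (huL1 : MemL1w n s u) (hvL1 : MemL1w n s v)
    (x : Rn n) (hu11 : C11At u x) (hv11 : C11At v x) :
    (∀ a, Integrable (fun y => sdelta u x y * Ker a y)) ∧
      (∀ a, Integrable (fun y => sdelta v x y * Ker a y)) ∧
      BddBelow (Set.range fun a => Lop (Ker a) u x) ∧
      BddBelow (Set.range fun a => Lop (Ker a) v x) ∧
      Mminus n s lam Lam (fun z => u z - v z) x ≤
        (⨅ a, Lop (Ker a) u x) - (⨅ a, Lop (Ker a) v x) ∧
      (⨅ a, Lop (Ker a) u x) - (⨅ a, Lop (Ker a) v x) ≤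
        Mplus n s lam Lam (fun z => u z - v z) x := by

  have keyu := integrable_abs_sdelta_rpow n hs0 hs1 hum huL1 hu11
  have keyv := integrable_abs_sdelta_rpow n hs0 hs1 hvm hvL1 hv11
  set D : Rn n → ℝ := fun z => u z - v z with hDdef
  have hDm : Measurable D := hum.sub hvm
  have hDL1 : MemL1w n s D := by
    have h := huL1.sub hvL1
    exact h.congr (ae_of_all _ fun z => by simp only [Pi.sub_apply, hDdef]; ring)
  have hD11 : C11At D x := by
    obtain ⟨Cu, hCu, ru, hru, hu⟩ := hu11
    obtain ⟨Cv, hCv, rv, hrv, hv⟩ := hv11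
    refine ⟨Cu + Cv, by linarith, min ru rv, lt_min hru hrv, fun y hy => ?_⟩
    have e : sdelta D x y = sdelta u x y - sdelta v x y := sdelta_sub u v x y
    rw [e]
    calc |sdelta u x y - sdelta v x y| ≤ |sdelta u x y| + |sdelta v x y| := abs_sub _ _
      _ ≤ Cu * ‖y‖ ^ 2 + Cv * ‖y‖ ^ 2 :=
          add_le_add (hu y (le_trans hy (min_le_left _ _)))
            (hv y (le_trans hy (min_le_right _ _)))
      _ = (Cu + Cv) * ‖y‖ ^ 2 := by ring
  have keyD := integrable_abs_sdelta_rpow n hs0 hs1 hDm hDL1 hD11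
  have hIu : ∀ a, Integrable (fun y : Rn n => sdelta u x y * Ker a y) := fun a =>
    integrable_sdelta_mul_kernel hlam (hK a) hum keyu
  have hIv : ∀ a, Integrable (fun y : Rn n => sdelta v x y * Ker a y) := fun a =>
    integrable_sdelta_mul_kernel hlam (hK a) hvm keyv
  have hIDK : ∀ a, Integrable (fun y : Rn n => sdelta D x y * Ker a y) := fun a =>
    integrable_sdelta_mul_kernel hlam (hK a) hDm keyD
  have hLop_sub : ∀ a, Lop (Ker a) u x - Lop (Ker a) v x = ∫ y, sdelta D x y * Ker a y := by
    intro a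
    rw [Lop, Lop, ← integral_sub (hIu a) (hIv a)]
    exact integral_congr_ae (ae_of_all _ fun y => by
      show sdelta u x y * Ker a y - sdelta v x y * Ker a y = sdelta D x y * Ker a y
      rw [hDdef, sdelta_sub]; ring)
  have hMm : Integrable (fun y : Rn n =>
      (lam * max (sdelta D x y) 0 - Lam * (-(min (sdelta D x y) 0))) * ‖y‖ ^ (-((n:ℝ)+2*s))) :=
    integrable_pucci lam Lam _ (measurable_sdelta hDm x) keyD
  have hMp : Integrable (fun y : Rn n =>
      (Lam * max (sdelta D x y) 0 - lam * (-(min (sdelta D x y) 0))) * ‖y‖ ^ (-((n:ℝ)+2*s))) :=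
    integrable_pucci Lam lam _ (measurable_sdelta hDm x) keyD
  have hmu : Integrable (fun y : Rn n =>
      (lam * max (sdelta u x y) 0 - Lam * (-(min (sdelta u x y) 0))) * ‖y‖ ^ (-((n:ℝ)+2*s))) :=
    integrable_pucci lam Lam _ (measurable_sdelta hum x) keyu
  have hmv : Integrable (fun y : Rn n =>
      (lam * max (sdelta v x y) 0 - Lam * (-(min (sdelta v x y) 0))) * ‖y‖ ^ (-((n:ℝ)+2*s))) :=
    integrable_pucci lam Lam _ (measurable_sdelta hvm x) keyv
  have hbbu : BddBelow (Set.range fun a => Lop (Ker a) u x) := by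
    refine ⟨∫ y, (lam * max (sdelta u x y) 0 - Lam * (-(min (sdelta u x y) 0)))
      * ‖y‖ ^ (-((n:ℝ)+2*s)), ?_⟩
    rintro z ⟨a, rfl⟩
    exact integral_mono hmu (hIu a)
      (fun y => (pointwise_bracket hlam hlL (hK a) u x y).1)
  have hbbv : BddBelow (Set.range fun a => Lop (Ker a) v x) := by
    refine ⟨∫ y, (lam * max (sdelta v x y) 0 - Lam * (-(min (sdelta v x y) 0)))
      * ‖y‖ ^ (-((n:ℝ)+2*s)), ?_⟩
    rintro z ⟨a, rfl⟩
    exact integral_mono hmv (hIv a)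
      (fun y => (pointwise_bracket hlam hlL (hK a) v x y).1)
  have hbr : ∀ a, Mminus n s lam Lam D x ≤ Lop (Ker a) u x - Lop (Ker a) v x ∧
      Lop (Ker a) u x - Lop (Ker a) v x ≤ Mplus n s lam Lam D x := by
    intro a
    rw [hLop_sub a, Mminus, Mplus]
    exact ⟨integral_mono hMm (hIDK a)
        (fun y => (pointwise_bracket hlam hlL (hK a) D x y).1),
      integral_mono (hIDK a) hMp
        (fun y => (pointwise_bracket hlam hlL (hK a) D x y).2)⟩
  have hIuLe : ∀ a, (⨅ b, Lop (Ker b) u x) ≤ Lop (Ker a) u x := fun a => ciInf_le hbbu a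
  have hIvLe : ∀ a, (⨅ b, Lop (Ker b) v x) ≤ Lop (Ker a) v x := fun a => ciInf_le hbbv a
  have hMm_le : Mminus n s lam Lam D x ≤
      (⨅ a, Lop (Ker a) u x) - (⨅ a, Lop (Ker a) v x) := by
    have h : Mminus n s lam Lam D x + (⨅ a, Lop (Ker a) v x) ≤ ⨅ a, Lop (Ker a) u x :=
      le_ciInf fun a => by linarith [(hbr a).1, hIvLe a]
    linarith
  have hMp_le : (⨅ a, Lop (Ker a) u x) - (⨅ a, Lop (Ker a) v x) ≤
      Mplus n s lam Lam D x := by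
    have h : (⨅ a, Lop (Ker a) u x) - Mplus n s lam Lam D x ≤ ⨅ a, Lop (Ker a) v x :=
      le_ciInf fun a => by linarith [(hbr a).2, hIuLe a]
    linarith
  exact ⟨hIu, hIv, hbbu, hbbv, hMm_le, hMp_le⟩
end
end

section
/- (Jensen inequality for concave nonlocal operators) Let {K_a}_{a∈A} ⊆ L₀ be a nonempty family of kernels with associated linear operators L_a, and set Iw(x) := inf_{a∈A} L_a w(x). Let u : ℝⁿ → ℝ be bounded and twice continuously differentiable with bounded second derivatives, and let μ ∈ L¹(ℝⁿ) satisfy μ ≥ 0 almost everywhere, μ compactly supported, and ∫_{ℝⁿ} μ(h) dh = 1. Define v(x) := ∫_{ℝⁿ} u(x+h) μ(h) dh. Then for every x ∈ ℝⁿ, Iv(x) ≥ ∫_{ℝⁿ} Iu(x+h) μ(h) dh. -/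
open MeasureTheory Metric Set Filter
open scoped ENNReal RealInnerProductSpace Topology

noncomputable section

section JensenAux

variable {n : ℕ}

lemma aux_integrableOn_ball (n : ℕ) (p : ℝ) (hp : p < n) :
    IntegrableOn (fun y : Rn n => ‖y‖ ^ (-p)) (ball (0 : Rn n) 1) := by
  have hmeas : Measurable fun y : Rn n => ‖y‖ ^ (-p) := by fun_prop
  rcases le_or_gt p 0 with hp0 | hp0
  · refine Measure.integrableOn_of_bounded (M := 1) measure_ball_lt_top.ne
      hmeas.aestronglyMeasurable ?_
    filter_upwards [self_mem_ae_restrict measurableSet_ball] with y hy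
    rw [Real.norm_eq_abs, abs_of_nonneg (Real.rpow_nonneg (norm_nonneg _) _)]
    exact Real.rpow_le_one (norm_nonneg _) (mem_ball_zero_iff.1 hy).le (neg_nonneg.2 hp0)
  · refine ⟨hmeas.aestronglyMeasurable, ?_⟩
    rw [hasFiniteIntegral_iff_ofReal
      (Eventually.of_forall fun y => Real.rpow_nonneg (norm_nonneg _) _)]
    set μ : Measure (Rn n) := volume.restrict (ball (0 : Rn n) 1) with hμdef
    rw [lintegral_eq_lintegral_meas_le μ
      (Eventually.of_forall fun y => Real.rpow_nonneg (norm_nonneg _) _) hmeas.aemeasurable]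
    set vb : ℝ≥0∞ := volume (ball (0 : Rn n) 1) with hvb
    have hvbt : vb ≠ ⊤ := measure_ball_lt_top.ne
    have hsub : ∀ t : ℝ, 0 < t →
        {a : Rn n | t ≤ ‖a‖ ^ (-p)} ⊆ closedBall 0 (t ^ (-(1 / p))) := by
      intro t ht a ha
      simp only [mem_setOf_eq] at ha
      rcases eq_or_ne a 0 with rfl | ha0
      · simp only [norm_zero] at ha
        rw [Real.zero_rpow (neg_ne_zero.2 hp0.ne')] at ha
        linarith
      · have hna : (0 : ℝ) < ‖a‖ := norm_pos_iff.2 ha0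
        rw [Real.rpow_neg (norm_nonneg _)] at ha
        have h1 : ‖a‖ ^ p ≤ t⁻¹ := by
          rw [← inv_inv (‖a‖ ^ p)]
          exact inv_anti₀ ht ha
        have h2 : (‖a‖ ^ p) ^ (1 / p) ≤ (t⁻¹) ^ (1 / p) :=
          Real.rpow_le_rpow (by positivity) h1 (by positivity)
        rw [← Real.rpow_mul (norm_nonneg _), mul_one_div_cancel hp0.ne', Real.rpow_one,
          Real.inv_rpow ht.le, ← Real.rpow_neg ht.le] at h2
        exact mem_closedBall_zero_iff.2 h2
    have hmeasbd : ∀ t : ℝ, 0 < t →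
        μ {a : Rn n | t ≤ ‖a‖ ^ (-p)} ≤ ENNReal.ofReal ((t ^ (-(1 / p))) ^ n) * vb := by
      intro t ht
      calc μ {a : Rn n | t ≤ ‖a‖ ^ (-p)} ≤ volume {a : Rn n | t ≤ ‖a‖ ^ (-p)} :=
            Measure.restrict_apply_le _ _
        _ ≤ volume (closedBall (0 : Rn n) (t ^ (-(1 / p)))) := measure_mono (hsub t ht)
        _ = ENNReal.ofReal ((t ^ (-(1 / p))) ^ Module.finrank ℝ (Rn n)) * vb :=
            Measure.addHaar_closedBall _ _ (Real.rpow_nonneg ht.le _)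
        _ = ENNReal.ofReal ((t ^ (-(1 / p))) ^ n) * vb := by
            rw [finrank_euclideanSpace_fin]
    calc ∫⁻ t in Ioi (0:ℝ), μ {a : Rn n | t ≤ ‖a‖ ^ (-p)}
        ≤ ∫⁻ t in Ioc (0:ℝ) 1 ∪ Ioi 1, μ {a : Rn n | t ≤ ‖a‖ ^ (-p)} :=
          lintegral_mono_set Ioi_subset_Ioc_union_Ioi
      _ ≤ (∫⁻ t in Ioc (0:ℝ) 1, μ {a : Rn n | t ≤ ‖a‖ ^ (-p)})
          + ∫⁻ t in Ioi (1:ℝ), μ {a : Rn n | t ≤ ‖a‖ ^ (-p)} := lintegral_union_le _ _ _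
      _ < ⊤ := by
          refine ENNReal.add_lt_top.2 ⟨?_, ?_⟩
          · calc (∫⁻ t in Ioc (0:ℝ) 1, μ {a : Rn n | t ≤ ‖a‖ ^ (-p)})
                ≤ ∫⁻ _ in Ioc (0:ℝ) 1, vb := by
                  refine setLIntegral_mono' measurableSet_Ioc fun t ht => ?_
                  calc μ {a : Rn n | t ≤ ‖a‖ ^ (-p)} ≤ μ univ := measure_mono (subset_univ _)
                    _ = vb := by rw [hμdef, Measure.restrict_apply_univ]
              _ = vb * volume (Ioc (0:ℝ) 1) := setLIntegral_const _ _
              _ < ⊤ := ENNReal.mul_lt_top hvbt.lt_top (by simp [Real.volume_Ioc])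
          · have hexp : -(1 / p) * (n : ℝ) < -1 := by
              have h1 : (1:ℝ) < (n : ℝ) / p := (one_lt_div hp0).2 hp
              have h2 : -(1 / p) * (n : ℝ) = -((n:ℝ) / p) := by ring
              rw [h2]; linarith
            calc (∫⁻ t in Ioi (1:ℝ), μ {a : Rn n | t ≤ ‖a‖ ^ (-p)})
                ≤ ∫⁻ t in Ioi (1:ℝ), ENNReal.ofReal (t ^ (-(1 / p) * (n:ℝ))) * vb := by
                  refine setLIntegral_mono' measurableSet_Ioi fun t ht => ?_
                  have ht0 : (0:ℝ) < t := lt_trans one_pos ht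
                  refine (hmeasbd t ht0).trans (le_of_eq ?_)
                  rw [← Real.rpow_natCast (t ^ (-(1/p))) n, ← Real.rpow_mul ht0.le]
              _ = (∫⁻ t in Ioi (1:ℝ), ENNReal.ofReal (t ^ (-(1 / p) * (n:ℝ)))) * vb :=
                  lintegral_mul_const' _ _ hvbt
              _ < ⊤ := ENNReal.mul_lt_top
                  ((integrableOn_Ioi_rpow_of_lt hexp one_pos).setLIntegral_lt_top) hvbt.lt_top

lemma aux_integrableOn_compl (n : ℕ) (q : ℝ) (hq : (n : ℝ) < q) :
    IntegrableOn (fun y : Rn n => ‖y‖ ^ (-q)) (ball (0 : Rn n) 1)ᶜ := by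
  have hq0 : (0:ℝ) < q := lt_of_le_of_lt (Nat.cast_nonneg n) hq
  have hbase : Integrable (fun y : Rn n => (2:ℝ) ^ q * (1 + ‖y‖) ^ (-q)) := by
    refine (integrable_one_add_norm ?_).const_mul _
    rw [finrank_euclideanSpace_fin]; exact hq
  refine (hbase.integrableOn).mono' ?_ ?_
  · exact (by fun_prop : Measurable fun y : Rn n => ‖y‖ ^ (-q)).aestronglyMeasurable
  · filter_upwards [self_mem_ae_restrict measurableSet_ball.compl] with y hy
    have hy1 : (1:ℝ) ≤ ‖y‖ := by
      simpa [mem_ball_zero_iff] using hy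
    have hy0 : (0:ℝ) < ‖y‖ := lt_of_lt_of_le one_pos hy1
    rw [Real.norm_eq_abs, abs_of_nonneg (Real.rpow_nonneg (norm_nonneg _) _)]
    have h1 : (1 + ‖y‖ : ℝ) ≤ 2 * ‖y‖ := by linarith
    have h2 : (2 * ‖y‖ : ℝ) ^ (-q) ≤ (1 + ‖y‖) ^ (-q) :=
      Real.rpow_le_rpow_of_nonpos (by positivity) h1 (by linarith)
    have h3 : (2 * ‖y‖ : ℝ) ^ (-q) = 2 ^ (-q) * ‖y‖ ^ (-q) :=
      Real.mul_rpow (by norm_num) (norm_nonneg _)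
    rw [h3] at h2
    have h4 : ‖y‖ ^ (-q) = 2 ^ q * (2 ^ (-q) * ‖y‖ ^ (-q)) := by
      rw [← mul_assoc, ← Real.rpow_add (by norm_num : (0:ℝ) < 2)]
      simp
    rw [h4]
    have h2q : (0:ℝ) < 2 ^ q := Real.rpow_pos_of_pos (by norm_num) _
    exact mul_le_mul_of_nonneg_left h2 h2q.le

lemma aux_integrable_g (n : ℕ) (hn : 1 ≤ n) (s : ℝ) (hs0 : 0 < s) (hs1 : s < 1)
    (c1 c2 : ℝ) (h1 : 0 ≤ c1) (h2 : 0 ≤ c2) :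
    Integrable (fun y : Rn n => min c1 (c2 * ‖y‖ ^ 2) * ‖y‖ ^ (-((n : ℝ) + 2 * s))) := by
  haveI : Nonempty (Fin n) := ⟨⟨0, hn⟩⟩
  have hmeas : Measurable fun y : Rn n => min c1 (c2 * ‖y‖ ^ 2) * ‖y‖ ^ (-((n : ℝ) + 2 * s)) := by
    fun_prop
  have h0ae : ∀ᵐ y : Rn n, y ≠ 0 := by
    rw [ae_iff]
    have h : {a : Rn n | ¬a ≠ 0} = {0} := by ext a; simp
    rw [h]
    exact measure_singleton 0
  rw [← integrableOn_univ, ← union_compl_self (ball (0 : Rn n) 1)]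
  refine IntegrableOn.union ?_ ?_
  · have hp : (n : ℝ) + 2 * s - 2 < n := by linarith
    refine ((aux_integrableOn_ball n ((n : ℝ) + 2 * s - 2) hp).const_mul c2).mono'
      hmeas.aestronglyMeasurable ?_
    refine ae_restrict_of_ae ?_
    filter_upwards [h0ae] with y hy0
    have hny : (0 : ℝ) < ‖y‖ := norm_pos_iff.2 hy0
    have hnn : 0 ≤ min c1 (c2 * ‖y‖ ^ 2) := le_min h1 (by positivity)
    rw [Real.norm_eq_abs, abs_of_nonneg (mul_nonneg hnn (Real.rpow_nonneg (norm_nonneg _) _))]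
    calc min c1 (c2 * ‖y‖ ^ 2) * ‖y‖ ^ (-((n : ℝ) + 2 * s))
        ≤ c2 * ‖y‖ ^ 2 * ‖y‖ ^ (-((n : ℝ) + 2 * s)) :=
          mul_le_mul_of_nonneg_right (min_le_right _ _) (Real.rpow_nonneg (norm_nonneg _) _)
      _ = c2 * ‖y‖ ^ (-((n : ℝ) + 2 * s - 2)) := by
          rw [mul_assoc]
          congr 1
          rw [← Real.rpow_natCast ‖y‖ 2, ← Real.rpow_add hny]
          norm_num
          ring_nf
  · have hq : (n : ℝ) < (n : ℝ) + 2 * s := by linarith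
    refine ((aux_integrableOn_compl n ((n : ℝ) + 2 * s) hq).const_mul c1).mono'
      hmeas.aestronglyMeasurable ?_
    refine Eventually.of_forall fun y => ?_
    have hnn : 0 ≤ min c1 (c2 * ‖y‖ ^ 2) := le_min h1 (by positivity)
    rw [Real.norm_eq_abs, abs_of_nonneg (mul_nonneg hnn (Real.rpow_nonneg (norm_nonneg _) _))]
    exact mul_le_mul_of_nonneg_right (min_le_left _ _) (Real.rpow_nonneg (norm_nonneg _) _)

lemma aux_sdelta_bound (n : ℕ) (u : Rn n → ℝ) (hu2 : ContDiff ℝ 2 u) (M M2 : ℝ)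
    (hub : ∀ x, |u x| ≤ M) (hD2 : ∀ x, ‖iteratedFDeriv ℝ 2 u x‖ ≤ M2) (z y : Rn n) :
    |sdelta u z y| ≤ min (4 * M) (M2 * ‖y‖ ^ 2) := by
  have hdiff : Differentiable ℝ u := hu2.differentiable (by norm_num)
  refine le_min ?_ ?_
  · have h1 := abs_le.1 (hub (z + y))
    have h2 := abs_le.1 (hub (z - y))
    have h3 := abs_le.1 (hub z)
    rw [abs_le]; unfold sdelta; constructor <;> nlinarith [h1.1, h1.2, h2.1, h2.2, h3.1, h3.2]
  · have hcd : ContDiff ℝ 1 (fderiv ℝ u) := hu2.fderiv_right (by norm_num)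
    have hbd : ∀ w : Rn n, ‖fderiv ℝ (fderiv ℝ u) w‖ ≤ M2 := by
      intro w
      have e1 : ‖fderiv ℝ (fderiv ℝ u) w‖ = ‖iteratedFDeriv ℝ 0 (fderiv ℝ (fderiv ℝ u)) w‖ :=
        by rw [norm_iteratedFDeriv_zero]
      rw [e1, norm_iteratedFDeriv_fderiv, norm_iteratedFDeriv_fderiv]
      exact hD2 w
    have hlip : ∀ a b : Rn n, ‖fderiv ℝ u a - fderiv ℝ u b‖ ≤ M2 * ‖a - b‖ := by
      intro a b
      refine Convex.norm_image_sub_le_of_norm_hasFDerivWithin_le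
        (f := fderiv ℝ u) (f' := fun w => fderiv ℝ (fderiv ℝ u) w) (s := univ)
        (fun w _ => ((hcd.differentiable one_ne_zero w).hasFDerivAt).hasFDerivWithinAt)
        (fun w _ => hbd w) convex_univ (mem_univ b) (mem_univ a)
    have htr : ∀ (c w : Rn n), HasFDerivAt (fun w => u (c + w)) (fderiv ℝ u (c + w)) w := by
      intro c w
      have h := ((hdiff (c + w)).hasFDerivAt).comp w ((hasFDerivAt_id w).const_add c)
      exact h
    set G : Rn n → ℝ := fun w => u (z + w) - u (z - y + w) with hG
    have hGder : ∀ w : Rn n, HasFDerivAt G (fderiv ℝ u (z + w) - fderiv ℝ u (z - y + w)) w :=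
      fun w => (htr z w).sub (htr (z - y) w)
    have hGbd : ∀ w : Rn n, ‖fderiv ℝ u (z + w) - fderiv ℝ u (z - y + w)‖ ≤ M2 * ‖y‖ := by
      intro w
      have h := hlip (z + w) (z - y + w)
      have he : z + w - (z - y + w) = y := by abel
      rwa [he] at h
    have key : ‖G y - G 0‖ ≤ M2 * ‖y‖ * ‖y - 0‖ :=
      Convex.norm_image_sub_le_of_norm_hasFDerivWithin_le
        (f := G) (f' := fun w => fderiv ℝ u (z + w) - fderiv ℝ u (z - y + w)) (s := univ)
        (fun w _ => (hGder w).hasFDerivWithinAt) (fun w _ => hGbd w) convex_univ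
        (mem_univ 0) (mem_univ y)
    have hGval : G y - G 0 = sdelta u z y := by
      simp only [hG, add_zero, sub_add_cancel]
      unfold sdelta
      ring
    rw [hGval, Real.norm_eq_abs, sub_zero] at key
    calc |sdelta u z y| ≤ M2 * ‖y‖ * ‖y‖ := key
      _ = M2 * ‖y‖ ^ 2 := by ring

end JensenAux

/-- **Jensen inequality for concave nonlocal operators.** If `I = inf_a L_a` and
`v = ∫ u(·+h)μ(h)dh` is a mollification of `u` by a compactly supported probability density
`μ`, then `Iv(x) ≥ ∫ Iu(x+h)μ(h)dh`. -/
theorem jensen_concave_nonlocal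
    (n : ℕ) (hn : 1 ≤ n) (s : ℝ) (hs0 : 0 < s) (hs1 : s < 1)
    (lam Lam : ℝ) (hlam : 0 < lam) (hlL : lam ≤ Lam)
    (A : Type) (hA : Nonempty A) (Ker : A → Rn n → ℝ)
    (hK : ∀ a, InL0 n s lam Lam (Ker a))
    (u : Rn n → ℝ) (hu2 : ContDiff ℝ 2 u)
    (hub : ∃ M, ∀ x, |u x| ≤ M)
    (hD2b : ∃ M, ∀ x, ‖iteratedFDeriv ℝ 2 u x‖ ≤ M)
    (μ : Rn n → ℝ) (hμint : Integrable μ) (hμpos : ∀ᵐ h, 0 ≤ μ h)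
    (hμsupp : HasCompactSupport μ) (hμ1 : (∫ h, μ h) = 1) :
    ∀ x : Rn n,
      (∫ h, (⨅ a, Lop (Ker a) u (x + h)) * μ h) ≤
        ⨅ a, Lop (Ker a) (fun z => ∫ h, u (z + h) * μ h) x := by
  intro x
  haveI : Nonempty (Fin n) := ⟨⟨0, hn⟩⟩
  haveI : Nonempty A := hA
  obtain ⟨M, hub⟩ := hub
  obtain ⟨M2, hD2⟩ := hD2b
  have hM : 0 ≤ M := le_trans (abs_nonneg _) (hub 0)
  have hM2 : 0 ≤ M2 := le_trans (norm_nonneg _) (hD2 0)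
  have hLam0 : 0 ≤ Lam := le_trans hlam.le hlL
  have hUc : Continuous u := hu2.continuous
  have hsd : ∀ z y, |sdelta u z y| ≤ min (4 * M) (M2 * ‖y‖ ^ 2) :=
    aux_sdelta_bound n u hu2 M M2 hub hD2
  set q : ℝ := (n : ℝ) + 2 * s with hq
  set g : Rn n → ℝ := fun y => min (4 * M) (M2 * ‖y‖ ^ 2) * ‖y‖ ^ (-q) * Lam with hg
  have hgint : Integrable g :=
    (aux_integrable_g n hn s hs0 hs1 (4 * M) M2 (by linarith) hM2).mul_const Lam
  have h0ae : ∀ᵐ y : Rn n, y ≠ 0 := by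
    rw [ae_iff]
    have h : {a : Rn n | ¬a ≠ 0} = {0} := by ext a; simp
    rw [h]
    exact measure_singleton 0
  have hKnn : ∀ a (y : Rn n), y ≠ 0 → 0 ≤ Ker a y := by
    intro a y hy
    refine le_trans ?_ ((hK a).2.2 y hy).1
    positivity
  -- pointwise bound
  have hbd_pt : ∀ a z (y : Rn n), y ≠ 0 → |sdelta u z y * Ker a y| ≤ g y := by
    intro a z y hy
    rw [abs_mul, abs_of_nonneg (hKnn a y hy)]
    calc |sdelta u z y| * Ker a y
        ≤ min (4 * M) (M2 * ‖y‖ ^ 2) * (Lam * ‖y‖ ^ (-q)) := by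
          refine mul_le_mul (hsd z y) ((hK a).2.2 y hy).2 (hKnn a y hy)
            (le_min (by linarith) (by positivity))
      _ = g y := by rw [hg]; ring
  have hbd_ae : ∀ a z, ∀ᵐ y : Rn n, ‖sdelta u z y * Ker a y‖ ≤ g y := by
    intro a z
    filter_upwards [h0ae] with y hy0
    rw [Real.norm_eq_abs]
    exact hbd_pt a z y hy0
  have hsdc : ∀ z, Continuous fun y : Rn n => sdelta u z y := by
    intro z
    show Continuous fun y : Rn n => u (z + y) + u (z - y) - 2 * u z
    exact ((hUc.comp (continuous_const.add continuous_id)).add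
      (hUc.comp (continuous_const.sub continuous_id))).sub continuous_const
  have haesm : ∀ a z, AEStronglyMeasurable (fun y : Rn n => sdelta u z y * Ker a y) volume :=
    fun a z => (((hsdc z).measurable).mul (hK a).1).aestronglyMeasurable
  have hintK : ∀ a z, Integrable (fun y : Rn n => sdelta u z y * Ker a y) :=
    fun a z => hgint.mono' (haesm a z) (hbd_ae a z)
  set C0 : ℝ := ∫ y, g y with hC0
  have hLopbd : ∀ a z, |Lop (Ker a) u z| ≤ C0 := by
    intro a z
    have h := norm_integral_le_of_norm_le hgint (hbd_ae a z)
    rw [Real.norm_eq_abs] at h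
    exact h
  have hLopcont : ∀ a, Continuous fun z => Lop (Ker a) u z := by
    intro a
    have h : Continuous fun z : Rn n => ∫ y, sdelta u z y * Ker a y := by
      refine continuous_of_dominated (fun z => haesm a z) (fun z => hbd_ae a z) hgint ?_
      refine Eventually.of_forall fun y => ?_
      show Continuous fun z : Rn n => sdelta u z y * Ker a y
      have hc : Continuous fun z : Rn n => sdelta u z y := by
        show Continuous fun z : Rn n => u (z + y) + u (z - y) - 2 * u z
        exact ((hUc.comp (continuous_id.add continuous_const)).add
          (hUc.comp (continuous_id.sub continuous_const))).sub (continuous_const.mul hUc)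
      exact hc.mul continuous_const
    exact h
  -- properties of v
  set v : Rn n → ℝ := fun z => ∫ h, u (z + h) * μ h with hv
  have hintuz : ∀ z, Integrable (fun h => u (z + h) * μ h) := fun z =>
    hμint.bdd_mul ((hUc.comp (continuous_const.add continuous_id)).aestronglyMeasurable)
      (Eventually.of_forall fun h => by rw [Real.norm_eq_abs]; exact hub _)
  have hsdv : ∀ y, sdelta v x y = ∫ h, sdelta u (x + h) y * μ h := by
    intro y
    have e1 : ∀ h : Rn n, sdelta u (x + h) y * μ h
        = u (x + y + h) * μ h + u (x - y + h) * μ h - 2 * (u (x + h) * μ h) := by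
      intro h
      simp only [sdelta]
      rw [show x + h + y = x + y + h from by abel, show x + h - y = x - y + h from by abel]
      ring
    show v (x + y) + v (x - y) - 2 * v x = _
    simp only [hv]
    have hstep : (∫ h, sdelta u (x + h) y * μ h)
        = (∫ h, u (x + y + h) * μ h) + (∫ h, u (x - y + h) * μ h)
          - 2 * ∫ h, u (x + h) * μ h := by
      calc (∫ h, sdelta u (x + h) y * μ h)
          = ∫ h, (u (x + y + h) * μ h + u (x - y + h) * μ h - 2 * (u (x + h) * μ h)) :=
            integral_congr_ae (Eventually.of_forall fun h => e1 h)
        _ = (∫ h, (u (x + y + h) * μ h + u (x - y + h) * μ h)) - ∫ h, 2 * (u (x + h) * μ h) :=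
            integral_sub ((hintuz (x + y)).add (hintuz (x - y))) ((hintuz x).const_mul 2)
        _ = (∫ h, u (x + y + h) * μ h) + (∫ h, u (x - y + h) * μ h)
            - 2 * ∫ h, u (x + h) * μ h := by
            rw [integral_add (hintuz (x + y)) (hintuz (x - y)), integral_const_mul]
    rw [hstep]
  -- Fubini
  have h0prod : ∀ᵐ p : Rn n × Rn n ∂(volume.prod volume), p.2 ≠ 0 := by
    rw [ae_iff]
    have h : {p : Rn n × Rn n | ¬p.2 ≠ 0} = (univ : Set (Rn n)) ×ˢ ({0} : Set (Rn n)) := by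
      ext ⟨p1, p2⟩
      simp [Set.mem_prod, eq_comm]
    rw [h, Measure.prod_prod, measure_singleton, mul_zero]
  have hfub : ∀ a, Lop (Ker a) v x = ∫ h, Lop (Ker a) u (x + h) * μ h := by
    intro a
    have hsdcp : Continuous fun p : Rn n × Rn n => sdelta u (x + p.1) p.2 := by
      show Continuous fun p : Rn n × Rn n =>
        u (x + p.1 + p.2) + u (x + p.1 - p.2) - 2 * u (x + p.1)
      have c1 : Continuous fun p : Rn n × Rn n => x + p.1 + p.2 :=
        (continuous_const.add continuous_fst).add continuous_snd
      have c2 : Continuous fun p : Rn n × Rn n => x + p.1 - p.2 :=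
        (continuous_const.add continuous_fst).sub continuous_snd
      have c3 : Continuous fun p : Rn n × Rn n => x + p.1 :=
        continuous_const.add continuous_fst
      exact ((hUc.comp c1).add (hUc.comp c2)).sub (continuous_const.mul (hUc.comp c3))
    have hprod : Integrable
        (fun p : Rn n × Rn n => sdelta u (x + p.1) p.2 * Ker a p.2 * μ p.1)
        (volume.prod volume) := by
      refine Integrable.mono'
        (g := fun p : Rn n × Rn n => ‖μ p.1‖ * g p.2)
        ((hμint.norm).mul_prod hgint) ?_ ?_
      · exact ((hsdcp.measurable.mul ((hK a).1.comp measurable_snd)).aestronglyMeasurable).mul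
          (hμint.aestronglyMeasurable.comp_fst)
      · filter_upwards [h0prod] with p hp2
        rw [Real.norm_eq_abs, abs_mul]
        calc |sdelta u (x + p.1) p.2 * Ker a p.2| * |μ p.1| ≤ g p.2 * |μ p.1| :=
              mul_le_mul_of_nonneg_right (hbd_pt a (x + p.1) p.2 hp2) (abs_nonneg _)
          _ = ‖μ p.1‖ * g p.2 := by rw [Real.norm_eq_abs]; ring
    have h1 : Lop (Ker a) v x = ∫ y, (∫ h, sdelta u (x + h) y * μ h) * Ker a y := by
      show (∫ y, sdelta v x y * Ker a y) = _
      refine integral_congr_ae (Eventually.of_forall fun y => ?_)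
      show sdelta v x y * Ker a y = (∫ h, sdelta u (x + h) y * μ h) * Ker a y
      rw [hsdv y]
    rw [h1]
    have h2 : ∀ y : Rn n, (∫ h, sdelta u (x + h) y * μ h) * Ker a y
        = ∫ h, sdelta u (x + h) y * Ker a y * μ h := by
      intro y
      rw [← integral_mul_const]
      refine integral_congr_ae (Eventually.of_forall fun h => ?_)
      ring
    have h3 : (∫ y, (∫ h, sdelta u (x + h) y * μ h) * Ker a y)
        = ∫ y, ∫ h, sdelta u (x + h) y * Ker a y * μ h := by
      refine integral_congr_ae (Eventually.of_forall fun y => ?_)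
      exact h2 y
    rw [h3]
    rw [← integral_integral_swap (f := fun h y => sdelta u (x + h) y * Ker a y * μ h) hprod]
    refine integral_congr_ae (Eventually.of_forall fun h => ?_)
    show (∫ y, sdelta u (x + h) y * Ker a y * μ h)
      = (∫ y, sdelta u (x + h) y * Ker a y) * μ h
    exact integral_mul_const _ _
  -- infimum function
  have hbdd : ∀ h : Rn n, BddBelow (range fun a => Lop (Ker a) u (x + h)) := by
    intro h
    refine ⟨-C0, ?_⟩
    rintro _ ⟨a, rfl⟩
    linarith [(abs_le.1 (hLopbd a (x + h))).1]
  have hΦbd : ∀ h : Rn n, |⨅ a, Lop (Ker a) u (x + h)| ≤ C0 := by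
    intro h
    rw [abs_le]
    constructor
    · exact le_ciInf fun a => (abs_le.1 (hLopbd a (x + h))).1
    · obtain ⟨a⟩ := hA
      exact le_trans (ciInf_le (hbdd h) a) (abs_le.1 (hLopbd a (x + h))).2
  have hΦmeas : Measurable fun h : Rn n => ⨅ a, Lop (Ker a) u (x + h) := by
    apply measurable_of_Iio
    intro c
    have h : (fun h : Rn n => ⨅ a, Lop (Ker a) u (x + h)) ⁻¹' Iio c
        = ⋃ a, (fun h : Rn n => Lop (Ker a) u (x + h)) ⁻¹' Iio c := by
      ext h
      simp only [mem_preimage, mem_Iio, mem_iUnion]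
      constructor
      · intro hlt; exact exists_lt_of_ciInf_lt hlt
      · rintro ⟨a, ha⟩; exact lt_of_le_of_lt (ciInf_le (hbdd h) a) ha
    rw [h]
    have hopen : IsOpen (⋃ a, (fun h : Rn n => Lop (Ker a) u (x + h)) ⁻¹' Iio c) :=
      isOpen_iUnion fun a =>
        isOpen_Iio.preimage ((hLopcont a).comp (continuous_const.add continuous_id))
    exact hopen.measurableSet
  have hΦint : Integrable (fun h => (⨅ a, Lop (Ker a) u (x + h)) * μ h) :=
    hμint.bdd_mul hΦmeas.aestronglyMeasurable
      (Eventually.of_forall fun h => by rw [Real.norm_eq_abs]; exact hΦbd h)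
  have hIa : ∀ a, Integrable (fun h => Lop (Ker a) u (x + h) * μ h) := fun a =>
    hμint.bdd_mul ((hLopcont a).comp (continuous_const.add continuous_id)).aestronglyMeasurable
      (Eventually.of_forall fun h => by rw [Real.norm_eq_abs]; exact hLopbd a (x + h))
  refine le_ciInf fun a => ?_
  rw [hfub a]
  refine integral_mono_ae hΦint (hIa a) ?_
  filter_upwards [hμpos] with h hμh
  exact mul_le_mul_of_nonneg_right (ciInf_le (hbdd h) a) hμh
end
end
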